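/- Let p ∈ (1,2) and define h(z) = 2^{2-p}·(1+z)^p − p·(1+z) + 1 − z^p for z ≥ 0. Then h(z) ≥ 0 for all z ≥ 0. -/

import Mathlib

open Real Set

-- Key concavity fact: for 0 ≤ z and 1 < p < 2, 1 + z^(p-1) ≤ 2^(2-p) * (1+z)^(p-1)
lemma key_concave (p : ℝ) (hp1 : 1 < p) (hp2 : p < 2) (z : ℝ) (hz : 0 ≤ z) :
    1 + z ^ (p - 1) ≤ (2 : ℝ) ^ (2 - p) * (1 + z) ^ (p - 1) := by
  have hq0 : (0:ℝ) ≤ p - 1 := by linarith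
  have hq1 : p - 1 ≤ 1 := by linarith
  have hcon := (Real.concaveOn_rpow hq0 hq1).2 (mem_Ici.mpr (by norm_num : (0:ℝ) ≤ 1))
    (mem_Ici.mpr hz) (by norm_num : (0:ℝ) ≤ 1/2) (by norm_num : (0:ℝ) ≤ 1/2)
    (by norm_num : (1/2 : ℝ) + 1/2 = 1)
  simp only [smul_eq_mul] at hcon
  -- hcon : 1/2 * 1^(p-1) + 1/2 * z^(p-1) ≤ (1/2 * 1 + 1/2 * z)^(p-1)
  have h1 : (1:ℝ) ^ (p - 1) = 1 := Real.one_rpow _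
  have hhalf : (1/2 * 1 + 1/2 * z : ℝ) = (1 + z) / 2 := by ring
  rw [h1, hhalf] at hcon
  have hz1 : (0:ℝ) ≤ 1 + z := by linarith
  have hdr : ((1 + z) / 2 : ℝ) ^ (p - 1) = (1 + z) ^ (p - 1) / 2 ^ (p - 1) :=
    Real.div_rpow hz1 (by norm_num : (0:ℝ) ≤ 2) (p - 1)
  rw [hdr] at hcon
  have hpow : (0:ℝ) < 2 ^ (p - 1) := Real.rpow_pos_of_pos (by norm_num) _
  have h2 : (2:ℝ) ^ (2 - p) * 2 ^ (p - 1) = 2 := by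
    rw [← Real.rpow_add (by norm_num : (0:ℝ) < 2)]; norm_num
  have hfin : 1 + z ^ (p - 1) ≤ 2 * ((1 + z) ^ (p - 1) / 2 ^ (p - 1)) := by linarith
  calc 1 + z ^ (p - 1) ≤ 2 * ((1 + z) ^ (p - 1) / 2 ^ (p - 1)) := hfin
    _ = (2 : ℝ) ^ (2 - p) * (1 + z) ^ (p - 1) := by
        refine mul_right_cancel₀ hpow.ne' ?_
        rw [mul_assoc, div_mul_cancel₀ _ hpow.ne']
        linear_combination -(1 + z) ^ (p - 1) * h2

theorem caseC_nonneg (p : ℝ) (hp1 : 1 < p) (hp2 : p < 2) (z : ℝ) (hz : 0 ≤ z) :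
    0 ≤ (2 : ℝ) ^ (2 - p) * (1 + z) ^ p - p * (1 + z) + 1 - z ^ p := by
  set c : ℝ := (2 : ℝ) ^ (2 - p) with hc
  set f : ℝ → ℝ := fun x => c * (1 + x) ^ p - p * (1 + x) + 1 - x ^ p with hf
  have hp1' : (1:ℝ) ≤ p := hp1.le
  have hderiv : ∀ x : ℝ, HasDerivAt f
      (c * (p * (1 + x) ^ (p - 1)) - p - p * x ^ (p - 1)) x := by
    intro x
    have h1 : HasDerivAt (fun x : ℝ => (1 + x) ^ p) (p * (1 + x) ^ (p - 1) * 1) x := by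
      exact (Real.hasDerivAt_rpow_const (Or.inr hp1')).comp x ((hasDerivAt_id x).const_add 1)
    have h2 : HasDerivAt (fun x : ℝ => x ^ p) (p * x ^ (p - 1)) x :=
      Real.hasDerivAt_rpow_const (Or.inr hp1')
    have h3 : HasDerivAt (fun x : ℝ => p * (1 + x)) (p * 1) x :=
      ((hasDerivAt_id x).const_add 1).const_mul p
    have := (((h1.const_mul c).sub h3).add_const 1).sub h2
    rw [show (c * (p * (1 + x) ^ (p - 1)) - p - p * x ^ (p - 1)) = c * (p * (1 + x) ^ (p - 1) * 1) - p * 1 - p * x ^ (p - 1) by ring]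
    exact this
  have hmono : MonotoneOn f (Ici 0) := by
    apply monotoneOn_of_deriv_nonneg (convex_Ici 0)
    · exact (Differentiable.continuous (fun x => (hderiv x).differentiableAt)).continuousOn
    · intro x _
      exact (hderiv x).differentiableAt.differentiableWithinAt
    · intro x hx
      rw [(hderiv x).deriv]
      have hx0 : 0 ≤ x := le_of_lt (by simpa using hx)
      have hkey := key_concave p hp1 hp2 x hx0
      have hp0 : (0:ℝ) < p := by linarith
      nlinarith [hkey]
  have h0 : f 0 ≤ f z := hmono (mem_Ici.mpr le_rfl) (mem_Ici.mpr hz) hz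
  have hf0 : 0 ≤ f 0 := by
    have : f 0 = c - p + 1 := by
      simp [hf, Real.zero_rpow (by linarith : p ≠ 0), Real.one_rpow]
    rw [this]
    have hcge : (1:ℝ) ≤ c := Real.one_le_rpow one_le_two (by linarith)
    linarith
  calc (0:ℝ) ≤ f 0 := hf0
    _ ≤ f z := h0
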